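/- Let P be a smooth d-dimensional lattice polytope and let γ be an integer such that for every vertex v, P is contained in the simplex C_{v,γ} = conv(v, v + γ(w_{E_1} − v), ..., v + γ(w_{E_d} − v)), where w_{E_i} − v are the primitive edge direction generators at v. Then σ(u, d_P·v) ≤ d_P·γ for every u ∈ d_P·P ∩ M and vertex v; in particular m_P ≤ d_P·γ. -/

import Mathlib

open Finset Pointwise

noncomputable section

/-- Lattice points: `ZL N = ℤ^N`. -/
abbrev ZL (N : ℕ) := Fin N → ℤ

/-- Embedding of the lattice into `ℝ^N`. -/
def toR {N : ℕ} (x : ZL N) : Fin N → ℝ := fun i => (x i : ℝ)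

/-- The lattice polytope spanned by a finite set `V` of lattice points. -/
def poly {N : ℕ} (V : Finset (ZL N)) : Set (Fin N → ℝ) :=
  convexHull ℝ (toR '' (V : Set (ZL N)))

/-- The lattice points of the dilate `k • P`. -/
def latPts {N : ℕ} (V : Finset (ZL N)) (k : ℕ) : Set (ZL N) :=
  {x | toR x ∈ (k : ℝ) • poly V}

/-- `P` is `k`-normal: every lattice point of `kP` is a sum of `k` lattice points of `P`. -/
def kNormal {N : ℕ} (V : Finset (ZL N)) (k : ℕ) : Prop :=
  ∀ x ∈ latPts V k, ∃ f : Fin k → ZL N, (∀ i, f i ∈ latPts V 1) ∧ ∑ i, f i = x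

/-- `P` is normal. -/
def NormalPoly {N : ℕ} (V : Finset (ZL N)) : Prop := ∀ k, 1 ≤ k → kNormal V k

/-- The set of which `d_P` is the least element. -/
def dSet {N : ℕ} (V : Finset (ZL N)) : Set ℕ :=
  {n | 0 < n ∧ ∀ k ≥ n, latPts V (k + 1) = latPts V 1 + latPts V k}

/-- The set of which the `k`-normality threshold `k_P` is the least element. -/
def kSet {N : ℕ} (V : Finset (ZL N)) : Set ℕ :=
  {K | 0 < K ∧ ∀ k ≥ K, kNormal V k}

/-- The set of which `ν_P` is the least element. -/
def nuSet {N : ℕ} (V : Finset (ZL N)) : Set ℕ :=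
  {n | 0 < n ∧ ∀ k ≥ n, latPts V (k + 1) = (V : Set (ZL N)) + latPts V k}

/-- `v` is a vertex of `P`. -/
def IsVertex {N : ℕ} (V : Finset (ZL N)) (v : ZL N) : Prop :=
  v ∈ V ∧ toR v ∈ Set.extremePoints ℝ (poly V)

/-- `P` is very ample: for every vertex `v`, every lattice point of the cone
`ℝ_{≥0}(P - v)` is a finite sum of elements `w - v` with `w ∈ P ∩ M`. -/
def VeryAmple {N : ℕ} (V : Finset (ZL N)) : Prop :=
  ∀ v, IsVertex V v → ∀ u : ZL N,
    (∃ c : ℝ, 0 ≤ c ∧ ∃ p ∈ poly V, toR u = c • (p - toR v)) →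
    ∃ (m : ℕ) (w : Fin m → ZL N), (∀ i, w i ∈ latPts V 1) ∧ u = ∑ i, (w i - v)

/-- The set of numbers `m` such that `x - d_P v` is a sum of `m` elements of `(P ∩ M) - v`;
`σ(x, d_P v)` is its least element. -/
def sigmaSet {N : ℕ} (V : Finset (ZL N)) (dP : ℕ) (x v : ZL N) : Set ℕ :=
  {m | ∃ w : Fin m → ZL N, (∀ i, w i ∈ latPts V 1) ∧ x - dP • v = ∑ i, (w i - v)}

/-- The set of all values `σ(x, d_P v)`; `m_P` is its greatest element. -/
def mSet {N : ℕ} (V : Finset (ZL N)) (dP : ℕ) : Set ℕ :=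
  {s | ∃ x ∈ latPts V dP, ∃ v, IsVertex V v ∧ IsLeast (sigmaSet V dP x v) s}

end
/-- `P` is smooth at each vertex `v`, witnessed by `w`: the points `w v i` are lattice
points of `P`, the differences `w v i − v` (the primitive edge direction generators at
`v`) form a `ℤ`-basis of the lattice, and they generate the tangent cone of `P` at `v`. -/
def SmoothPolyAt {d : ℕ} (V : Finset (ZL d)) (w : ZL d → Fin d → ZL d) (v : ZL d) : Prop :=
  (∀ i, w v i ∈ latPts V 1) ∧
  (∀ x : ZL d, ∃! a : Fin d → ℤ, x = ∑ i, a i • (w v i - v)) ∧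
  (∀ p ∈ poly V, ∃ a : Fin d → ℝ, (∀ i, 0 ≤ a i) ∧
    p = toR v + ∑ i, a i • (toR (w v i) - toR v))

/-- For a smooth `d`-dimensional lattice polytope `P` and an integer `γ`
such that `P ⊆ C_{v,γ}` for every vertex `v`, one has `σ(u, d_P·v) ≤ d_P·γ` for every
`u ∈ d_P·P ∩ M` and vertex `v`; in particular `m_P ≤ d_P·γ`. -/
theorem stmt13 {d : ℕ} (V : Finset (ZL d)) (w : ZL d → Fin d → ZL d)
    (hdim : Module.finrank ℝ ↥(vectorSpan ℝ (poly V)) = d)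
    (hsmooth : ∀ v, IsVertex V v → SmoothPolyAt V w v)
    (γ dP : ℕ)
    (hdP : IsLeast (dSet V) dP)
    (hγ : ∀ v, IsVertex V v → poly V ⊆
      convexHull ℝ (insert (toR v)
        (Set.range fun i : Fin d => toR v + (γ : ℝ) • (toR (w v i) - toR v)))) :
    (∀ u ∈ latPts V dP, ∀ v, IsVertex V v →
        ∀ s, IsLeast (sigmaSet V dP u v) s → s ≤ dP * γ) ∧
      ∀ mP, IsGreatest (mSet V dP) mP → mP ≤ dP * γ := by
  have main : ∀ u ∈ latPts V dP, ∀ v, IsVertex V v →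
      ∀ s, IsLeast (sigmaSet V dP u v) s → s ≤ dP * γ := by
    intro u hu v hv s hs
    obtain ⟨hw1, hw2, -⟩ := hsmooth v hv
    set bR : Fin d → (Fin d → ℝ) := fun i => toR (w v i) - toR v with hbR
    -- casting sums
    have key : ∀ (a : Fin d → ℤ) (x : ZL d), x = ∑ i, a i • (w v i - v) →
        toR x = ∑ i, (a i : ℝ) • bR i := by
      intro a x hx
      funext j
      simp only [toR, hx, Finset.sum_apply, Pi.smul_apply, Pi.sub_apply, hbR,
        smul_eq_mul]
      push_cast
      ring
    -- spanning
    have hspan : ⊤ ≤ Submodule.span ℝ (Set.range bR) := by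
      rw [← (Pi.basisFun ℝ (Fin d)).span_eq]
      rw [Submodule.span_le]
      rintro - ⟨j, rfl⟩
      obtain ⟨a, ha, -⟩ := hw2 (fun i => if i = j then 1 else 0)
      have : toR (fun i => if i = j then 1 else 0) = ∑ i, (a i : ℝ) • bR i := key a _ ha
      have hpb : (Pi.basisFun ℝ (Fin d)) j = toR (fun i => if i = j then 1 else 0) := by
        funext i
        simp [toR, Pi.basisFun_apply, Pi.single_apply]
      rw [hpb, this]
      exact Submodule.sum_mem _ fun i _ =>
        Submodule.smul_mem _ _ (Submodule.subset_span ⟨i, rfl⟩)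
    have hcard : Fintype.card (Fin d) = Module.finrank ℝ (Fin d → ℝ) := by simp
    let B : Module.Basis (Fin d) ℝ (Fin d → ℝ) := basisOfTopLeSpanOfCardEqFinrank bR hspan hcard
    have hB : ⇑B = bR := coe_basisOfTopLeSpanOfCardEqFinrank bR hspan hcard
    -- the convex region
    set S : Set (Fin d → ℝ) :=
      {q | (∀ i, 0 ≤ B.repr (q - toR v) i) ∧ ∑ i, B.repr (q - toR v) i ≤ (γ : ℝ)} with hS
    have hSconv : Convex ℝ S := by
      rintro x ⟨hx1, hx2⟩ y ⟨hy1, hy2⟩ a b ha hb hab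
      have hq : a • x + b • y - toR v = a • (x - toR v) + b • (y - toR v) := by
        have hv' : toR v = a • toR v + b • toR v := by rw [← add_smul, hab, one_smul]
        rw [smul_sub, smul_sub]
        conv_lhs => rw [hv']
        abel
      have hrepr : ∀ i, B.repr (a • x + b • y - toR v) i
          = a * B.repr (x - toR v) i + b * B.repr (y - toR v) i := by
        intro i
        rw [hq, map_add, map_smul, map_smul]
        simp
      constructor
      · intro i
        rw [hrepr i]
        exact add_nonneg (mul_nonneg ha (hx1 i)) (mul_nonneg hb (hy1 i))
      · calc ∑ i, B.repr (a • x + b • y - toR v) i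
            = a * ∑ i, B.repr (x - toR v) i + b * ∑ i, B.repr (y - toR v) i := by
              simp only [hrepr, Finset.sum_add_distrib, Finset.mul_sum]
          _ ≤ a * γ + b * γ := by
              gcongr <;> assumption
          _ = (γ : ℝ) := by rw [← add_mul, hab, one_mul]
    have hgen : insert (toR v)
        (Set.range fun i : Fin d => toR v + (γ : ℝ) • (toR (w v i) - toR v)) ⊆ S := by
      rintro q (rfl | ⟨i, rfl⟩)
      · constructor <;> simp
      · have hq : toR v + (γ : ℝ) • (toR (w v i) - toR v) - toR v = (γ : ℝ) • B i := by
          rw [hB]; abel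
        constructor
        · intro j
          rw [hq, map_smul, Module.Basis.repr_self]
          simp only [Finsupp.smul_apply, smul_eq_mul]
          rcases eq_or_ne j i with rfl | hji
          · simp
          · simp [Finsupp.single_apply, hji.symm]
        · rw [hq, map_smul, Module.Basis.repr_self]
          simp [Finsupp.single_apply, Finset.sum_ite_eq']
    -- get p
    obtain ⟨p, hp, hup⟩ := hu
    have hpS : p ∈ S := convexHull_min hgen hSconv (hγ v hv hp)
    -- coordinates of u - dP v
    obtain ⟨a, ha, -⟩ := hw2 (u - dP • v)
    have htoR : toR (u - dP • v) = ∑ i, (a i : ℝ) • bR i := key a _ ha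
    have htoR2 : toR (u - dP • v) = toR u - (dP : ℝ) • toR v := by
      funext j
      simp [toR, Pi.sub_apply]
    have hrepr1 : ∀ i, B.repr (toR u - (dP : ℝ) • toR v) i = (a i : ℝ) := by
      intro i
      rw [← htoR2, htoR, ← hB]
      simp only [map_sum, map_smul, Finsupp.coe_finset_sum, Finset.sum_apply,
        Finsupp.smul_apply, Module.Basis.repr_self, smul_eq_mul]
      rw [Finset.sum_eq_single i]
      · simp
      · intro j _ hji; simp [Finsupp.single_apply, hji]
      · simp
    have hrepr2 : ∀ i, B.repr (toR u - (dP : ℝ) • toR v) i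
        = (dP : ℝ) * B.repr (p - toR v) i := by
      intro i
      have : toR u - (dP : ℝ) • toR v = (dP : ℝ) • (p - toR v) := by
        rw [← hup, smul_sub]
      rw [this, map_smul]
      simp
    have hanonneg : ∀ i, 0 ≤ a i := by
      intro i
      have : (0 : ℝ) ≤ (a i : ℝ) := by
        rw [← hrepr1 i, hrepr2 i]
        exact mul_nonneg (Nat.cast_nonneg _) (hpS.1 i)
      exact_mod_cast this
    have hasum : (∑ i, (a i : ℝ)) ≤ (dP : ℝ) * γ := by
      calc ∑ i, (a i : ℝ) = ∑ i, (dP : ℝ) * B.repr (p - toR v) i := by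
            simp only [← hrepr1, hrepr2]
        _ = (dP : ℝ) * ∑ i, B.repr (p - toR v) i := by rw [Finset.mul_sum]
        _ ≤ (dP : ℝ) * γ := by
            gcongr
            exact hpS.2
    -- build the witness
    set n : Fin d → ℕ := fun i => (a i).toNat with hn
    set m : ℕ := ∑ i, n i with hm
    have hmle : m ≤ dP * γ := by
      have : (m : ℝ) ≤ (dP : ℝ) * γ := by
        rw [hm]
        push_cast
        calc ∑ i, ((a i).toNat : ℝ) = ∑ i, (a i : ℝ) := by
              refine Finset.sum_congr rfl fun i _ => ?_
              exact_mod_cast Int.toNat_of_nonneg (hanonneg i)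
          _ ≤ (dP : ℝ) * γ := hasum
      exact_mod_cast this
    have hcardm : Fintype.card (Σ i : Fin d, Fin (n i)) = m := by
      simp [hm, Fintype.card_sigma]
    let e : (Σ i : Fin d, Fin (n i)) ≃ Fin m := Fintype.equivFinOfCardEq hcardm
    refine le_trans (hs.2 ?_) hmle
    refine ⟨fun j => w v (e.symm j).1, fun j => hw1 _, ?_⟩
    rw [ha]
    have hsum : ∑ j : Fin m, ((fun j => w v (e.symm j).1) j - v)
        = ∑ σ : Σ i : Fin d, Fin (n i), (w v σ.1 - v) :=
      Fintype.sum_equiv e.symm _ _ (fun j => rfl)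
    rw [hsum, ← Finset.univ_sigma_univ, Finset.sum_sigma]
    refine Finset.sum_congr rfl fun i _ => ?_
    dsimp only
    rw [Finset.sum_const, Finset.card_univ, Fintype.card_fin]
    show a i • (w v i - v) = ((a i).toNat) • (w v i - v)
    rw [← natCast_zsmul, Int.toNat_of_nonneg (hanonneg i)]
  exact ⟨main, fun mP hmP => by
    obtain ⟨x, hx, v, hv, hle⟩ := hmP.1
    exact main x hx v hv mP hle⟩
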